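/- Let A be symmetric positive definite, N symmetric with λ_min(N) > -λ_min(A), and β_n = (λ_min(N)+λ_max(N))/2. Then I - (A + β_n I)⁻¹(A + N) = (A + β_n I)⁻¹(β_n I - N), and its spectral norm is bounded by (β_n - λ_min(N))/(λ_min(A) + β_n) < 1. -/

import Mathlib

open Matrix
open scoped RealInnerProductSpace

noncomputable def specNorm {n : ℕ} (A : Matrix (Fin n) (Fin n) ℝ) : ℝ :=
  ‖Matrix.toEuclideanCLM (𝕜 := ℝ) A‖

noncomputable def lamMin {n : ℕ} [NeZero n] {A : Matrix (Fin n) (Fin n) ℝ}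
    (hA : A.IsHermitian) : ℝ :=
  Finset.univ.inf' Finset.univ_nonempty hA.eigenvalues

noncomputable def lamMax {n : ℕ} [NeZero n] {A : Matrix (Fin n) (Fin n) ℝ}
    (hA : A.IsHermitian) : ℝ :=
  Finset.univ.sup' Finset.univ_nonempty hA.eigenvalues

section Aux

variable {n : ℕ} [NeZero n]

private lemma repr_toEuclideanLin
    (M : Matrix (Fin n) (Fin n) ℝ) (hM : M.IsHermitian)
    (b : OrthonormalBasis (Fin n) ℝ (EuclideanSpace ℝ (Fin n))) (μ : Fin n → ℝ)
    (hb : ∀ j, M *ᵥ ⇑(b j) = μ j • ⇑(b j))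
    (x : EuclideanSpace ℝ (Fin n)) (j : Fin n) :
    b.repr (toEuclideanLin M x) j = μ j * b.repr x j := by
  have hsymm := (isHermitian_iff_isSymmetric).1 hM
  have hMb : toEuclideanLin M (b j) = μ j • (b j) := by
    ext i
    have := congrFun (hb j) i
    simpa [toEuclideanLin_apply] using this
  rw [b.repr_apply_apply, b.repr_apply_apply, ← hsymm (b j) x, hMb,
    inner_smul_left]
  simp

private lemma norm_sq_repr (b : OrthonormalBasis (Fin n) ℝ (EuclideanSpace ℝ (Fin n)))
    (y : EuclideanSpace ℝ (Fin n)) : ‖y‖ ^ 2 = ∑ j, (b.repr y j) ^ 2 := by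
  rw [← b.repr.norm_map y, EuclideanSpace.norm_eq, Real.sq_sqrt (by positivity)]
  simp [sq_abs]

private lemma specNorm_le_of_eigen
    (M : Matrix (Fin n) (Fin n) ℝ) (hM : M.IsHermitian)
    (b : OrthonormalBasis (Fin n) ℝ (EuclideanSpace ℝ (Fin n))) (μ : Fin n → ℝ)
    (hb : ∀ j, M *ᵥ ⇑(b j) = μ j • ⇑(b j))
    (c : ℝ) (hc : ∀ j, |μ j| ≤ c) : specNorm M ≤ c := by
  have hc0 : 0 ≤ c := le_trans (abs_nonneg _) (hc ⟨0, Nat.pos_of_ne_zero (NeZero.ne n)⟩)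
  refine ContinuousLinearMap.opNorm_le_bound _ hc0 fun x => ?_
  have happ : (toEuclideanCLM (𝕜 := ℝ) M) x = toEuclideanLin M x := rfl
  have key : ‖(toEuclideanCLM (𝕜 := ℝ) M) x‖ ^ 2 ≤ (c * ‖x‖) ^ 2 := by
    rw [happ, norm_sq_repr b, mul_pow, norm_sq_repr b x, Finset.mul_sum]
    refine Finset.sum_le_sum fun j _ => ?_
    rw [repr_toEuclideanLin M hM b μ hb x j, mul_pow]
    have h1 : μ j ^ 2 ≤ c ^ 2 := sq_le_sq' (neg_le_of_abs_le (hc j)) (le_of_abs_le (hc j))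
    exact mul_le_mul_of_nonneg_right h1 (sq_nonneg _)
  have := Real.sqrt_le_sqrt key
  rwa [Real.sqrt_sq (norm_nonneg _), Real.sqrt_sq (by positivity)] at this

private lemma inner_ge_of_eigen
    (M : Matrix (Fin n) (Fin n) ℝ) (hM : M.IsHermitian)
    (b : OrthonormalBasis (Fin n) ℝ (EuclideanSpace ℝ (Fin n))) (μ : Fin n → ℝ)
    (hb : ∀ j, M *ᵥ ⇑(b j) = μ j • ⇑(b j))
    (c : ℝ) (hc : ∀ j, c ≤ μ j) (x : EuclideanSpace ℝ (Fin n)) :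
    c * ‖x‖ ^ 2 ≤ (inner ℝ x (toEuclideanLin M x) : ℝ) := by
  have h1 : (inner ℝ x (toEuclideanLin M x) : ℝ)
      = ∑ j, b.repr x j * (μ j * b.repr x j) := by
    rw [← b.repr.inner_map_map x (toEuclideanLin M x)]
    rw [PiLp.inner_apply]
    refine Finset.sum_congr rfl fun j _ => ?_
    rw [repr_toEuclideanLin M hM b μ hb x j]
    simp
    ring
  rw [h1, norm_sq_repr b x, Finset.mul_sum]
  refine Finset.sum_le_sum fun j _ => ?_
  have : c * (b.repr x j) ^ 2 ≤ μ j * (b.repr x j) ^ 2 :=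
    mul_le_mul_of_nonneg_right (hc j) (sq_nonneg _)
  nlinarith [this]

end Aux

/-- With `A` SPD, `N` symmetric, `λ_min(N) > -λ_min(A)` and `β = (λ_min(N)+λ_max(N))/2`:
`I - (A + βI)⁻¹(A + N) = (A + βI)⁻¹(βI - N)`, and its spectral norm is bounded by
`(β - λ_min(N))/(λ_min(A) + β) < 1`. -/
theorem quasi_newton_contraction {n : ℕ} [NeZero n]
    (A N : Matrix (Fin n) (Fin n) ℝ)
    (hA : A.PosDef) (hN : N.IsHermitian)
    (hNA : -lamMin hA.1 < lamMin hN)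
    (β : ℝ) (hβ : β = (lamMin hN + lamMax hN) / 2) :
    (1 : Matrix (Fin n) (Fin n) ℝ) - (A + β • 1)⁻¹ * (A + N)
        = (A + β • 1)⁻¹ * (β • 1 - N) ∧
    specNorm ((A + β • 1)⁻¹ * (β • 1 - N)) ≤ (β - lamMin hN) / (lamMin hA.1 + β) ∧
    (β - lamMin hN) / (lamMin hA.1 + β) < 1 := by
  set a := lamMin hA.1 with ha_def
  set m := lamMin hN with hm_def
  set mM := lamMax hN with hmM_def
  -- basic facts about the scalars
  have hmmM : m ≤ mM := by
    obtain ⟨j, -, hj⟩ := Finset.exists_mem_eq_inf' (Finset.univ_nonempty) hN.eigenvalues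
    rw [hm_def, lamMin, hj]
    exact Finset.le_sup' _ (Finset.mem_univ j)
  have hmβ : m ≤ β := by rw [hβ]; linarith
  have haβ : 0 < a + β := by linarith
  have hβm : 0 ≤ β - m := by linarith
  -- A's eigenvalue bound
  have hAeig : ∀ j, a ≤ hA.1.eigenvalues j := fun j =>
    Finset.inf'_le _ (Finset.mem_univ j)
  set B := A + β • (1 : Matrix (Fin n) (Fin n) ℝ) with hB_def
  -- quadratic form bound for B
  have hBquad : ∀ x : EuclideanSpace ℝ (Fin n),
      (a + β) * ‖x‖ ^ 2 ≤ (inner ℝ x (toEuclideanLin B x) : ℝ) := by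
    intro x
    have hA' : a * ‖x‖ ^ 2 ≤ (inner ℝ x (toEuclideanLin A x) : ℝ) :=
      inner_ge_of_eigen A hA.1 hA.1.eigenvectorBasis hA.1.eigenvalues
        hA.1.mulVec_eigenvectorBasis a hAeig x
    have hlin : toEuclideanLin B x = toEuclideanLin A x + β • x := by
      have h1 : toEuclideanLin (1 : Matrix (Fin n) (Fin n) ℝ) x = x := by
        ext i; simp [toEuclideanLin_apply]
      rw [hB_def, map_add, LinearMap.add_apply, _root_.map_smul, LinearMap.smul_apply, h1]
    rw [hlin, inner_add_right, real_inner_smul_right, real_inner_self_eq_norm_sq]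
    linarith
  -- B is positive definite
  have hBH : B.IsHermitian := by
    refine hA.1.add ?_
    simp [Matrix.IsHermitian, Matrix.conjTranspose_smul]
  have hBposdef : B.PosDef := by
    refine Matrix.PosDef.of_dotProduct_mulVec_pos hBH fun x hx => ?_
    set x' : EuclideanSpace ℝ (Fin n) := (WithLp.equiv 2 (Fin n → ℝ)).symm x with hx'
    have hxnorm : 0 < ‖x'‖ := by
      rw [norm_pos_iff]
      simpa [hx'] using hx
    have h1 := hBquad x'
    have h2 : (inner ℝ x' (toEuclideanLin B x') : ℝ) = star x ⬝ᵥ (B *ᵥ x) := by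
      rw [PiLp.inner_apply]
      simp [toEuclideanLin_apply, dotProduct, hx', RCLike.inner_apply, mulVec]
      exact Finset.sum_congr rfl fun _ _ => mul_comm _ _
    rw [h2] at h1
    have : 0 < (a + β) * ‖x'‖ ^ 2 := by positivity
    exact lt_of_lt_of_le this h1
  have hBdet : IsUnit B.det := hBposdef.det_pos.ne'.isUnit
  have hBinv : B⁻¹ * B = 1 := Matrix.nonsing_inv_mul B hBdet
  have hBinv' : B * B⁻¹ = 1 := Matrix.mul_nonsing_inv B hBdet
  -- part 1
  have part1 : (1 : Matrix (Fin n) (Fin n) ℝ) - B⁻¹ * (A + N) = B⁻¹ * (β • 1 - N) := by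
    calc (1 : Matrix (Fin n) (Fin n) ℝ) - B⁻¹ * (A + N)
        = B⁻¹ * B - B⁻¹ * (A + N) := by rw [hBinv]
      _ = B⁻¹ * (B - (A + N)) := by rw [Matrix.mul_sub]
      _ = B⁻¹ * (β • 1 - N) := by
          congr 1
          rw [hB_def]
          abel
  refine ⟨part1, ?_, ?_⟩
  · -- the norm bound
    have hsplit : specNorm (B⁻¹ * (β • 1 - N)) ≤
        ‖toEuclideanCLM (𝕜 := ℝ) B⁻¹‖ * ‖toEuclideanCLM (𝕜 := ℝ) (β • (1 : Matrix (Fin n) (Fin n) ℝ) - N)‖ := by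
      rw [specNorm, _root_.map_mul]
      exact norm_mul_le _ _
    have hinv : ‖toEuclideanCLM (𝕜 := ℝ) B⁻¹‖ ≤ 1 / (a + β) := by
      refine ContinuousLinearMap.opNorm_le_bound _ (by positivity) fun y => ?_
      set x := (toEuclideanCLM (𝕜 := ℝ) B⁻¹) y with hxdef
      have hBx : (toEuclideanCLM (𝕜 := ℝ) B) x = y := by
        rw [hxdef, ← ContinuousLinearMap.comp_apply, ← ContinuousLinearMap.mul_def,
          ← _root_.map_mul, hBinv', _root_.map_one]
        rfl
      have h1 := hBquad x
      have h2 : (inner ℝ x (toEuclideanLin B x) : ℝ) = (inner ℝ x (y) : ℝ) := by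
        rw [← hBx]; rfl
      rw [h2] at h1
      have h3 : (inner ℝ x (y) : ℝ) ≤ ‖x‖ * ‖y‖ := real_inner_le_norm x y
      rcases eq_or_lt_of_le (norm_nonneg x) with h|h
      · rw [← h]; positivity
      · have h4 : (a + β) * ‖x‖ ≤ ‖y‖ := by nlinarith
        rw [one_div, ← div_eq_inv_mul, le_div_iff₀ haβ]
        linarith [mul_comm (a + β) ‖x‖]
    have hsub : ‖toEuclideanCLM (𝕜 := ℝ) (β • (1 : Matrix (Fin n) (Fin n) ℝ) - N)‖ ≤ β - m := by
      have := specNorm_le_of_eigen (β • 1 - N)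
        (by
          refine Matrix.IsHermitian.sub ?_ hN
          simp [Matrix.IsHermitian, Matrix.conjTranspose_smul])
        hN.eigenvectorBasis (fun j => β - hN.eigenvalues j)
        (fun j => by
          rw [Matrix.sub_mulVec, Matrix.smul_mulVec, Matrix.one_mulVec,
            hN.mulVec_eigenvectorBasis, sub_smul]) (β - m) ?_
      · exact this
      · intro j
        have h1 : m ≤ hN.eigenvalues j := Finset.inf'_le _ (Finset.mem_univ j)
        have h2 : hN.eigenvalues j ≤ mM := Finset.le_sup' _ (Finset.mem_univ j)
        rw [abs_le, hβ]
        constructor <;> linarith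
    calc specNorm (B⁻¹ * (β • 1 - N))
        ≤ ‖toEuclideanCLM (𝕜 := ℝ) B⁻¹‖ * ‖toEuclideanCLM (𝕜 := ℝ) (β • (1 : Matrix (Fin n) (Fin n) ℝ) - N)‖ := hsplit
      _ ≤ (1 / (a + β)) * (β - m) := by
          exact mul_le_mul hinv hsub (norm_nonneg _) (by positivity)
      _ = (β - m) / (a + β) := by ring
  · rw [div_lt_one haβ]
    linarith
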